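/- Let Q be a conjunctive query over a finite variable set V with body atoms u_1,…,u_m and let Φ be a set of functional dependencies over V. Let s ≥ 0 be a real number such that every Shannon-feasible function h for (Q,Φ) satisfies h(vars(u_0)) ≤ s. Then for every database D over a finite universe that is compatible with Φ, |Q(D)| ≤ rmax(Q,D)^s (as real numbers, using the real power function). -/

import Mathlib

open Finset

section EntStuff
variable {α β : Type*} [DecidableEq β]

/-- Size of the fiber of `g` through `t`, within `T`. -/
def nfib (T : Finset α) (g : α → β) (t : α) : ℕ := (T.filter fun t' => g t' = g t).card

/-- Entropy (natural log) of the push-forward of the uniform distribution on `T` under `g`. -/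
noncomputable def ent (T : Finset α) (g : α → β) : ℝ :=
  Real.log T.card - (T.card : ℝ)⁻¹ * ∑ t ∈ T, Real.log (nfib T g t)

variable {T : Finset α} {g g' : α → β} {t : α}

lemma nfib_pos (ht : t ∈ T) : 0 < nfib T g t :=
  card_pos.mpr ⟨t, mem_filter.mpr ⟨ht, rfl⟩⟩

lemma nfib_le_card : nfib T g t ≤ T.card := card_le_card (filter_subset _ _)

lemma nfib_eq_of_mem_fiber {p : α} (hp : g p = g t) : nfib T g p = nfib T g t := by
  unfold nfib; simp_rw [hp]

lemma jensen_log (hT : T.Nonempty) (x : α → ℝ) (hx : ∀ t ∈ T, 0 < x t) :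
    (T.card : ℝ)⁻¹ * ∑ t ∈ T, Real.log (x t) ≤ Real.log ((T.card : ℝ)⁻¹ * ∑ t ∈ T, x t) := by
  have hN : (0:ℝ) < T.card := by exact_mod_cast card_pos.mpr hT
  have h := (strictConcaveOn_log_Ioi.concaveOn).le_map_sum (t := T)
    (w := fun _ => (T.card:ℝ)⁻¹) (p := x)
    (fun i _ => by positivity) (by simp [mul_inv_cancel₀ hN.ne']) (fun i hi => hx i hi)
  simpa [smul_eq_mul, mul_sum] using h

lemma ent_congr {γ : Type*} [DecidableEq γ] {g' : α → γ}
    (h : ∀ t ∈ T, ∀ t' ∈ T, (g t = g t' ↔ g' t = g' t')) :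
    ent T g = ent T g' := by
  unfold ent
  congr 1
  congr 1
  apply sum_congr rfl
  intro t ht
  congr 2
  unfold nfib
  apply congrArg
  apply filter_congr
  intro t' ht'
  exact h t' ht' t ht

lemma ent_nonneg (hT : T.Nonempty) : 0 ≤ ent T g := by
  have hN : (0:ℝ) < T.card := by exact_mod_cast card_pos.mpr hT
  have h1 : ∑ t ∈ T, Real.log (nfib T g t) ≤ ∑ t ∈ T, Real.log T.card := by
    apply sum_le_sum
    intro t ht
    apply Real.log_le_log (by exact_mod_cast nfib_pos ht)
    exact_mod_cast nfib_le_card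
  have h2 : (T.card : ℝ)⁻¹ * ∑ t ∈ T, Real.log (nfib T g t) ≤ Real.log T.card := by
    rw [inv_mul_le_iff₀ hN]
    simpa [sum_const, nsmul_eq_mul, mul_comm] using h1
  unfold ent; linarith

lemma sum_inv_nfib : ∑ t ∈ T, ((nfib T g t : ℝ))⁻¹ = ((T.image g).card : ℝ) := by
  classical
  rw [show ((T.image g).card : ℝ) = ∑ a ∈ T.image g, (1:ℝ) by simp]
  rw [Finset.sum_image' (fun t => ((nfib T g t : ℝ))⁻¹)]
  intro i hi
  rw [show ∑ j ∈ T.filter (fun j => g j = g i), ((nfib T g j : ℝ))⁻¹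
      = ∑ j ∈ T.filter (fun j => g j = g i), ((nfib T g i : ℝ))⁻¹ from
    sum_congr rfl fun j hj => by rw [nfib_eq_of_mem_fiber (mem_filter.mp hj).2]]
  rw [sum_const, nsmul_eq_mul]
  have : 0 < nfib T g i := nfib_pos hi
  rw [show (T.filter fun j => g j = g i).card = nfib T g i from rfl]
  field_simp

lemma ent_le_log_card_image (hT : T.Nonempty) :
    ent T g ≤ Real.log ((T.image g).card) := by
  have hN : (0:ℝ) < T.card := by exact_mod_cast card_pos.mpr hT
  have hM : (0:ℝ) < (T.image g).card := by
    exact_mod_cast card_pos.mpr (hT.image g)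
  have hj := jensen_log hT (fun t => ((nfib T g t : ℝ))⁻¹)
    (fun t ht => by have := nfib_pos (g := g) ht; positivity)
  rw [sum_inv_nfib] at hj
  have hlog : ∀ t ∈ T, Real.log (((nfib T g t : ℝ))⁻¹) = - Real.log (nfib T g t) :=
    fun t ht => Real.log_inv _
  rw [sum_congr rfl hlog, sum_neg_distrib] at hj
  have : Real.log ((T.card:ℝ)⁻¹ * (T.image g).card)
      = Real.log ((T.image g).card) - Real.log T.card := by
    rw [Real.log_mul (by positivity) hM.ne', Real.log_inv]; ring
  rw [this] at hj
  unfold ent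
  have := mul_neg ((T.card:ℝ)⁻¹) (∑ t ∈ T, Real.log (nfib T g t))
  nlinarith [hj]

lemma ent_mono {γ : Type*} [DecidableEq γ] {g' : α → γ}
    (h : ∀ t ∈ T, ∀ t' ∈ T, g' t = g' t' → g t = g t') :
    ent T g ≤ ent T g' := by
  have hsub : ∀ t ∈ T, nfib T g' t ≤ nfib T g t := by
    intro t ht
    apply card_le_card
    intro t' ht'
    rw [mem_filter] at *
    exact ⟨ht'.1, h t' ht'.1 t ht ht'.2⟩
  have : ∑ t ∈ T, Real.log (nfib T g' t) ≤ ∑ t ∈ T, Real.log (nfib T g t) := by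
    apply sum_le_sum
    intro t ht
    apply Real.log_le_log (by exact_mod_cast nfib_pos ht)
    exact_mod_cast hsub t ht
  unfold ent
  have hN : (0:ℝ) ≤ (T.card:ℝ)⁻¹ := by positivity
  nlinarith

lemma ent_const (hc : ∀ t ∈ T, ∀ t' ∈ T, g t = g t') : ent T g = 0 := by
  rcases T.eq_empty_or_nonempty with rfl | hT
  · simp [ent]
  have : ∀ t ∈ T, nfib T g t = T.card := by
    intro t ht
    unfold nfib
    rw [filter_true_of_mem (fun t' ht' => hc t' ht' t ht)]
  unfold ent
  rw [sum_congr rfl (fun t ht => by rw [this t ht]), sum_const, nsmul_eq_mul]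
  have hN : (0:ℝ) < T.card := by exact_mod_cast card_pos.mpr hT
  field_simp
  simp

lemma ent_eq_log_card (hinj : ∀ t ∈ T, ∀ t' ∈ T, g t = g t' → t = t') :
    ent T g = Real.log T.card := by
  have : ∀ t ∈ T, nfib T g t = 1 := by
    intro t ht
    unfold nfib
    rw [show T.filter (fun t' => g t' = g t) = {t} from ?_]
    · exact card_singleton t
    ext t'
    simp only [mem_filter, mem_singleton]
    constructor
    · rintro ⟨h1, h2⟩; exact hinj t' h1 t ht h2
    · rintro rfl; exact ⟨ht, rfl⟩
  unfold ent
  rw [sum_congr rfl (fun t ht => by rw [this t ht])]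
  simp

variable {β₁ β₂ β₃ β₄ : Type*} [DecidableEq β₁] [DecidableEq β₂] [DecidableEq β₃]
  [DecidableEq β₄] {a : α → β₁} {b : α → β₂} {c : α → β₃} {d : α → β₄}

lemma counting
    (hba : ∀ t ∈ T, ∀ t' ∈ T, b t = b t' → a t = a t')
    (hca : ∀ t ∈ T, ∀ t' ∈ T, c t = c t' → a t = a t')
    (hd : ∀ t ∈ T, ∀ t' ∈ T, (d t = d t' ↔ (b t = b t' ∧ c t = c t'))) :
    ∑ t ∈ T, (nfib T b t * nfib T c t : ℝ) / (nfib T a t * nfib T d t) ≤ T.card := by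
  classical
  have step1 : ∀ t ∈ T, (nfib T b t * nfib T c t : ℝ) / (nfib T a t * nfib T d t)
      = ∑ p ∈ T, ∑ q ∈ T, (if b p = b t ∧ c q = c t then
          ((nfib T a t * nfib T d t : ℝ))⁻¹ else 0) := by
    intro t ht
    have hb : ((nfib T b t : ℕ) : ℝ) = ∑ p ∈ T, (if b p = b t then (1:ℝ) else 0) := by
      simp [nfib, sum_boole]
    have hc : ((nfib T c t : ℕ) : ℝ) = ∑ q ∈ T, (if c q = c t then (1:ℝ) else 0) := by
      simp [nfib, sum_boole]
    rw [div_eq_mul_inv, hb, hc, sum_mul_sum]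
    rw [sum_mul]
    apply sum_congr rfl; intro p _
    rw [sum_mul]
    apply sum_congr rfl; intro q _
    by_cases h1 : b p = b t <;> by_cases h2 : c q = c t <;> simp [h1, h2]
  rw [sum_congr rfl step1]
  rw [show ∑ t ∈ T, ∑ p ∈ T, ∑ q ∈ T, (if b p = b t ∧ c q = c t then
        ((nfib T a t * nfib T d t : ℝ))⁻¹ else 0)
      = ∑ p ∈ T, ∑ q ∈ T, ∑ t ∈ T, (if b p = b t ∧ c q = c t then
        ((nfib T a t * nfib T d t : ℝ))⁻¹ else 0) from by
    rw [sum_comm]; exact sum_congr rfl fun p _ => sum_comm]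
  have step2 : ∀ p ∈ T, ∑ q ∈ T, ∑ t ∈ T, (if b p = b t ∧ c q = c t then
      ((nfib T a t * nfib T d t : ℝ))⁻¹ else 0) ≤ 1 := by
    intro p hp
    have inner : ∀ q ∈ T, ∑ t ∈ T, (if b p = b t ∧ c q = c t then
        ((nfib T a t * nfib T d t : ℝ))⁻¹ else 0)
        ≤ (if a q = a p then ((nfib T a p : ℝ))⁻¹ else 0) := by
      intro q hq
      set W := T.filter (fun t => b t = b p ∧ c t = c q) with hW
      have hsum : ∑ t ∈ T, (if b p = b t ∧ c q = c t then
          ((nfib T a t * nfib T d t : ℝ))⁻¹ else 0)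
          = ∑ t ∈ W, ((nfib T a t * nfib T d t : ℝ))⁻¹ := by
        rw [hW, sum_filter]
        exact sum_congr rfl fun t _ => if_congr (and_congr eq_comm eq_comm) rfl rfl
      rw [hsum]
      rcases W.eq_empty_or_nonempty with hWe | ⟨t0, ht0⟩
      · rw [hWe]; simp only [sum_empty]
        split <;> positivity
      · have ht0T : t0 ∈ T := (mem_filter.mp ht0).1
        have hbt0 : b t0 = b p := (mem_filter.mp ht0).2.1
        have hct0 : c t0 = c q := (mem_filter.mp ht0).2.2
        have haqp : a q = a p := by
          rw [← hca t0 ht0T q hq hct0, hba t0 ht0T p hp hbt0]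
        rw [if_pos haqp]
        have hval : ∀ t ∈ W, ((nfib T a t * nfib T d t : ℝ))⁻¹
            = ((nfib T a p * W.card : ℝ))⁻¹ := by
          intro t htW
          have htT : t ∈ T := (mem_filter.mp htW).1
          have hbt : b t = b p := (mem_filter.mp htW).2.1
          have hct : c t = c q := (mem_filter.mp htW).2.2
          have hna : nfib T a t = nfib T a p := by
            have : a t = a p := hba t htT p hp hbt
            exact nfib_eq_of_mem_fiber this
          have hnd : nfib T d t = W.card := by
            unfold nfib
            congr 1
            apply filter_congr
            intro t' ht'
            rw [hd t' ht' t htT, hbt, hct]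
          rw [hna, hnd]
        rw [sum_congr rfl hval, sum_const, nsmul_eq_mul]
        have hWpos : (0:ℝ) < W.card := by exact_mod_cast card_pos.mpr ⟨t0, ht0⟩
        have hnap : (0:ℝ) < nfib T a p := by exact_mod_cast nfib_pos hp
        rw [mul_inv]
        rw [mul_comm ((nfib T a p:ℝ))⁻¹ _, ← mul_assoc, mul_inv_cancel₀ hWpos.ne']
        simp
    calc ∑ q ∈ T, ∑ t ∈ T, (if b p = b t ∧ c q = c t then
          ((nfib T a t * nfib T d t : ℝ))⁻¹ else 0)
        ≤ ∑ q ∈ T, (if a q = a p then ((nfib T a p : ℝ))⁻¹ else 0) :=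
          sum_le_sum inner
      _ = 1 := by
          rw [← sum_filter, sum_const, nsmul_eq_mul]
          have hnap : (0:ℝ) < nfib T a p := by exact_mod_cast nfib_pos hp
          rw [show (T.filter fun q => a q = a p).card = nfib T a p from rfl]
          field_simp
  calc ∑ p ∈ T, ∑ q ∈ T, ∑ t ∈ T, (if b p = b t ∧ c q = c t then
        ((nfib T a t * nfib T d t : ℝ))⁻¹ else 0)
      ≤ ∑ p ∈ T, (1:ℝ) := sum_le_sum step2
    _ = T.card := by simp

lemma ent_submodular (hT : T.Nonempty)
    (hba : ∀ t ∈ T, ∀ t' ∈ T, b t = b t' → a t = a t')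
    (hca : ∀ t ∈ T, ∀ t' ∈ T, c t = c t' → a t = a t')
    (hd : ∀ t ∈ T, ∀ t' ∈ T, (d t = d t' ↔ (b t = b t' ∧ c t = c t'))) :
    ent T a + ent T d ≤ ent T b + ent T c := by
  have hN : (0:ℝ) < T.card := by exact_mod_cast card_pos.mpr hT
  set x : α → ℝ := fun t => (nfib T b t * nfib T c t : ℝ) / (nfib T a t * nfib T d t) with hxdef
  have hx : ∀ t ∈ T, 0 < x t := by
    intro t ht
    have h1 : 0 < nfib T b t := nfib_pos ht
    have h2 : 0 < nfib T c t := nfib_pos ht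
    have h3 : 0 < nfib T a t := nfib_pos ht
    have h4 : 0 < nfib T d t := nfib_pos ht
    rw [hxdef]
    positivity
  have hsumx : ∑ t ∈ T, x t ≤ T.card := counting hba hca hd
  have hsumx0 : 0 ≤ ∑ t ∈ T, x t := sum_nonneg fun t ht => (hx t ht).le
  have hj := jensen_log hT x hx
  have h0 : (T.card : ℝ)⁻¹ * ∑ t ∈ T, Real.log (x t) ≤ 0 := by
    refine le_trans hj (Real.log_nonpos (by positivity) ?_)
    rw [inv_mul_le_iff₀ hN, mul_one]
    exact hsumx
  have hsl : ∑ t ∈ T, Real.log (x t) ≤ 0 := by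
    by_contra hcon
    push_neg at hcon
    nlinarith [inv_pos.mpr hN]
  have hlog : ∀ t ∈ T, Real.log (x t)
      = Real.log (nfib T b t) + Real.log (nfib T c t)
        - Real.log (nfib T a t) - Real.log (nfib T d t) := by
    intro t ht
    have h1 : (0:ℝ) < nfib T b t := by exact_mod_cast nfib_pos ht
    have h2 : (0:ℝ) < nfib T c t := by exact_mod_cast nfib_pos ht
    have h3 : (0:ℝ) < nfib T a t := by exact_mod_cast nfib_pos ht
    have h4 : (0:ℝ) < nfib T d t := by exact_mod_cast nfib_pos ht
    rw [hxdef]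
    rw [Real.log_div (by positivity) (by positivity),
      Real.log_mul h1.ne' h2.ne', Real.log_mul h3.ne' h4.ne']
    ring
  rw [sum_congr rfl hlog] at hsl
  have hexp : ∑ t ∈ T, (Real.log (nfib T b t) + Real.log (nfib T c t)
        - Real.log (nfib T a t) - Real.log (nfib T d t))
      = (∑ t ∈ T, Real.log (nfib T b t)) + (∑ t ∈ T, Real.log (nfib T c t))
        - (∑ t ∈ T, Real.log (nfib T a t)) - (∑ t ∈ T, Real.log (nfib T d t)) := by
    rw [sum_sub_distrib, sum_sub_distrib, sum_add_distrib]
  rw [hexp] at hsl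
  unfold ent
  have hinv : (0:ℝ) ≤ (T.card : ℝ)⁻¹ := by positivity
  nlinarith [mul_le_mul_of_nonneg_left hsl hinv]

end EntStuff

section Pim
variable {V U : Type} [DecidableEq V]

/-- Restriction of `θ` to a finite set `S` of variables, as a total function into `Option U`. -/
def pim (S : Finset V) (θ : V → U) : V → Option U := fun v => if v ∈ S then some (θ v) else none

lemma pim_eq_iff {S : Finset V} {θ θ' : V → U} :
    pim S θ = pim S θ' ↔ ∀ v ∈ S, θ v = θ' v := by
  constructor
  · intro h v hv
    have := congrFun h v
    simp only [pim, if_pos hv, Option.some.injEq] at this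
    exact this
  · intro h
    funext v
    by_cases hv : v ∈ S
    · simp only [pim, if_pos hv, Option.some.injEq]
      exact h v hv
    · simp only [pim, if_neg hv]

lemma pim_eq_of_subset {S S' : Finset V} (hss : S ⊆ S') {θ θ' : V → U}
    (h : pim S' θ = pim S' θ') : pim S θ = pim S θ' :=
  pim_eq_iff.mpr fun v hv => pim_eq_iff.mp h v (hss hv)

end Pim

set_option maxHeartbeats 2000000 in
/-- Let `Q` be a conjunctive query over a finite variable set `V` with output
atom `u0` and body atoms `u j` (each labelled by relation symbol `σ j`), and let `Φ` be a set of
functional dependencies over `V`.  If `s ≥ 0` is a real number such that every Shannon-feasible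
function `h` for `(Q, Φ)` satisfies `h (vars u0) ≤ s`, then for every database `D` (over a finite
universe `U`) compatible with `Φ`, `|Q(D)| ≤ rmax(Q,D) ^ s` (real power). -/
theorem size_bound_of_shannon_LP
    {V : Type} [Fintype V] [DecidableEq V]
    {n m : ℕ} (hm : 1 ≤ m)
    {a0 : ℕ} (u0 : Fin a0 → V)
    (ar : Fin n → ℕ) (σ : Fin m → Fin n)
    (u : (j : Fin m) → Fin (ar (σ j)) → V)
    (Φ : Set (Finset V × V))
    (s : ℝ) (hs : 0 ≤ s)
    (hLP : ∀ h : Finset V → ℝ,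
      h ∅ = 0 →
      (∀ j : Fin m, h (Finset.univ.image (u j)) ≤ 1) →
      (∀ p ∈ Φ, h (insert p.2 p.1) = h p.1) →
      (∀ x : V, 0 ≤ h Finset.univ - h (({x} : Finset V)ᶜ)) →
      (∀ x y : V, x ≠ y → ∀ S : Finset V, S ⊆ ({x, y} : Finset V)ᶜ →
        0 ≤ h (insert x S) + h (insert y S) - h S - h (insert x (insert y S))) →
      h (Finset.univ.image u0) ≤ s)
    {U : Type} [Fintype U] [DecidableEq U]
    (R : (i : Fin n) → Finset (Fin (ar i) → U))
    (hcompat : ∀ p ∈ Φ, ∀ θ θ' : V → U,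
      (∀ j, θ ∘ u j ∈ R (σ j)) → (∀ j, θ' ∘ u j ∈ R (σ j)) →
      (∀ x ∈ p.1, θ x = θ' x) → θ p.2 = θ' p.2) :
    ((((Finset.univ.filter (fun θ : V → U => ∀ j, θ ∘ u j ∈ R (σ j))).image
        (fun θ => θ ∘ u0)).card : ℕ) : ℝ) ≤
      ((Finset.univ.sup (fun i => (R i).card) : ℕ) : ℝ) ^ s := by
  classical
  set rmax := Finset.univ.sup (fun i => (R i).card) with hrmaxdef
  set F := Finset.univ.filter (fun θ : V → U => ∀ j, θ ∘ u j ∈ R (σ j)) with hFdef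
  set Q' := F.image (fun θ => θ ∘ u0) with hQdef
  rcases Q'.eq_empty_or_nonempty with hQe | hQne
  · rw [hQe]
    simp only [card_empty, Nat.cast_zero]
    exact Real.rpow_nonneg (Nat.cast_nonneg _) s
  have hwit : ∀ q ∈ Q', ∃ θ, θ ∈ F ∧ θ ∘ u0 = q := by
    intro q hq
    obtain ⟨θ, hθ, h⟩ := Finset.mem_image.mp hq
    exact ⟨θ, hθ, h⟩
  have hne : Nonempty (V → U) := by
    obtain ⟨q0, hq0⟩ := hQne
    obtain ⟨θ0, -, -⟩ := Finset.mem_image.mp hq0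
    exact ⟨θ0⟩
  choose! w hwF hw0 using hwit
  set T : Finset (V → U) := Q'.image w with hTdef
  have hTF : ∀ t ∈ T, ∀ j, t ∘ u j ∈ R (σ j) := by
    intro t ht
    rw [hTdef, mem_image] at ht
    obtain ⟨q, hq, rfl⟩ := ht
    have h1 := hwF q hq
    rw [hFdef, mem_filter] at h1
    exact h1.2
  have hinj : ∀ t ∈ T, ∀ t' ∈ T, t ∘ u0 = t' ∘ u0 → t = t' := by
    intro t ht t' ht' h
    rw [hTdef, mem_image] at ht ht'
    obtain ⟨q, hq, rfl⟩ := ht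
    obtain ⟨q', hq', rfl⟩ := ht'
    rw [show q = q' from by rw [← hw0 q hq, ← hw0 q' hq', h]]
  have hcardT : T.card = Q'.card := by
    rw [hTdef]
    apply card_image_of_injOn
    intro q hq q' hq' h
    rw [← hw0 q hq, ← hw0 q' hq', h]
  have hTne : T.Nonempty := by
    rw [← card_pos, hcardT, card_pos]; exact hQne
  have hQpos : (0:ℝ) < Q'.card := by exact_mod_cast card_pos.mpr hQne
  have hout : ent T (pim (Finset.univ.image u0)) = Real.log Q'.card := by
    have h1 : ent T (pim (Finset.univ.image u0)) = ent T (fun θ : V → U => θ ∘ u0) := by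
      apply ent_congr
      intro t _ t' _
      rw [pim_eq_iff]
      constructor
      · intro h
        funext k
        exact h (u0 k) (mem_image_of_mem _ (mem_univ k))
      · intro h v hv
        obtain ⟨k, _, rfl⟩ := mem_image.mp hv
        exact congrFun h k
    rw [h1, ent_eq_log_card hinj, hcardT]
  have hatom : ∀ j, ent T (pim (Finset.univ.image (u j))) ≤ Real.log ((R (σ j)).card) := by
    intro j
    have h1 : ent T (pim (Finset.univ.image (u j))) = ent T (fun θ : V → U => θ ∘ u j) := by
      apply ent_congr
      intro t _ t' _
      rw [pim_eq_iff]
      constructor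
      · intro h
        funext k
        exact h (u j k) (mem_image_of_mem _ (mem_univ k))
      · intro h v hv
        obtain ⟨k, _, rfl⟩ := mem_image.mp hv
        exact congrFun h k
    rw [h1]
    refine le_trans (ent_le_log_card_image hTne) ?_
    apply Real.log_le_log (by exact_mod_cast card_pos.mpr (hTne.image _))
    have hsub : T.image (fun θ : V → U => θ ∘ u j) ⊆ R (σ j) := by
      intro x hx
      obtain ⟨t, ht, rfl⟩ := mem_image.mp hx
      exact hTF t ht j
    exact_mod_cast card_le_card hsub
  have hRpos : ∀ j : Fin m, 0 < (R (σ j)).card := by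
    intro j
    obtain ⟨t0, ht0⟩ := hTne
    exact card_pos.mpr ⟨_, hTF t0 ht0 j⟩
  have hub : ∀ j : Fin m, ((R (σ j)).card : ℝ) ≤ (rmax : ℝ) := by
    intro j
    exact_mod_cast Finset.le_sup (f := fun i => (R i).card) (mem_univ (σ j))
  have hmain : ∀ c : ℝ, 0 ≤ c →
      (∀ j, c * ent T (pim (Finset.univ.image (u j))) ≤ 1) →
      c * Real.log Q'.card ≤ s := by
    intro c hc hcatom
    have h0 : c * ent T (pim (∅ : Finset V)) = 0 := by
      rw [ent_const, mul_zero]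
      intro t _ t' _
      funext v
      simp [pim]
    have hfd : ∀ p ∈ Φ, c * ent T (pim (insert p.2 p.1)) = c * ent T (pim p.1) := by
      intro p hp
      congr 1
      apply ent_congr
      intro t ht t' ht'
      constructor
      · intro h
        exact pim_eq_of_subset (subset_insert _ _) h
      · intro h
        rw [pim_eq_iff]
        intro v hv
        rcases mem_insert.mp hv with rfl | hv1
        · exact hcompat p hp t t' (hTF t ht) (hTF t' ht') (pim_eq_iff.mp h)
        · exact pim_eq_iff.mp h v hv1
    have hmono : ∀ x : V, 0 ≤ c * ent T (pim (Finset.univ : Finset V))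
        - c * ent T (pim (({x} : Finset V)ᶜ)) := by
      intro x
      have h3 := ent_mono (T := T) (g := pim (({x} : Finset V)ᶜ)) (g' := pim (Finset.univ : Finset V))
        (fun t _ t' _ h => pim_eq_of_subset (subset_univ _) h)
      have h4 := mul_le_mul_of_nonneg_left h3 hc
      linarith
    have hsubm : ∀ x y : V, x ≠ y → ∀ S : Finset V, S ⊆ ({x, y} : Finset V)ᶜ →
        0 ≤ c * ent T (pim (insert x S)) + c * ent T (pim (insert y S))
          - c * ent T (pim S) - c * ent T (pim (insert x (insert y S))) := by
      intro x y _ S _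
      have := ent_submodular (T := T) (a := pim S) (b := pim (insert x S))
        (c := pim (insert y S)) (d := pim (insert x (insert y S))) hTne
        (fun t _ t' _ h => pim_eq_of_subset (subset_insert _ _) h)
        (fun t _ t' _ h => pim_eq_of_subset (subset_insert _ _) h)
        ?_
      · have h4 := mul_le_mul_of_nonneg_left this hc
        linarith
      intro t _ t' _
      constructor
      · intro h
        exact ⟨pim_eq_of_subset (insert_subset_insert x (subset_insert y S)) h,
          pim_eq_of_subset (subset_insert x _) h⟩
      · rintro ⟨hb, hcc⟩
        rw [pim_eq_iff]
        intro v hv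
        rcases mem_insert.mp hv with rfl | hv1
        · exact pim_eq_iff.mp hb v (mem_insert_self _ _)
        · exact pim_eq_iff.mp hcc v hv1
    have hres := hLP (fun S => c * ent T (pim S)) h0 hcatom hfd hmono hsubm
    simpa only [hout] using hres
  by_cases h2 : 2 ≤ rmax
  · have hr1 : (1:ℝ) < (rmax : ℝ) := by exact_mod_cast h2
    have hlr : 0 < Real.log rmax := Real.log_pos hr1
    have hcatom : ∀ j, (Real.log rmax)⁻¹ * ent T (pim (Finset.univ.image (u j))) ≤ 1 := by
      intro j
      rw [inv_mul_le_iff₀ hlr, mul_one]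
      refine le_trans (hatom j) (Real.log_le_log ?_ (hub j))
      exact_mod_cast hRpos j
    have hc := hmain (Real.log rmax)⁻¹ (by positivity) hcatom
    rw [inv_mul_le_iff₀ hlr] at hc
    calc ((Q'.card : ℕ) : ℝ) = Real.exp (Real.log Q'.card) := (Real.exp_log hQpos).symm
      _ ≤ Real.exp (Real.log rmax * s) := Real.exp_le_exp.mpr (by linarith)
      _ = ((rmax : ℕ) : ℝ) ^ s := by
          rw [Real.rpow_def_of_pos (by linarith : (0:ℝ) < (rmax:ℝ))]
  · have h1 : 1 ≤ rmax := by
      have := hRpos ⟨0, hm⟩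
      calc 1 ≤ (R (σ ⟨0, hm⟩)).card := this
        _ ≤ rmax := Finset.le_sup (f := fun i => (R i).card) (mem_univ _)
    have hrm1 : rmax = 1 := le_antisymm (by omega) h1
    have hQ1 : Q'.card ≤ 1 := by
      by_contra hQ2
      push_neg at hQ2
      have hlq : 0 < Real.log Q'.card := by
        apply Real.log_pos
        exact_mod_cast hQ2
      have hcatom : ∀ j, ((s+1)/Real.log Q'.card) * ent T (pim (Finset.univ.image (u j))) ≤ 1 := by
        intro j
        have hent0 : ent T (pim (Finset.univ.image (u j))) = 0 := by
          have hle := hatom j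
          have hr1 : ((R (σ j)).card : ℝ) ≤ 1 := by
            refine le_trans (hub j) ?_
            rw [hrm1]; norm_num
          have hl0 : Real.log ((R (σ j)).card) ≤ 0 :=
            Real.log_nonpos (by positivity) hr1
          have hnn := ent_nonneg (g := pim (Finset.univ.image (u j))) hTne
          linarith
        rw [hent0, mul_zero]
        exact zero_le_one
      have hc := hmain ((s+1)/Real.log Q'.card) (by positivity) hcatom
      rw [div_mul_cancel₀ _ hlq.ne'] at hc
      linarith
    have hle1 : ((Q'.card : ℕ) : ℝ) ≤ 1 := by exact_mod_cast hQ1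
    rw [hrm1]
    calc ((Q'.card : ℕ) : ℝ) ≤ 1 := hle1
      _ = ((1:ℕ):ℝ) ^ s := by rw [Nat.cast_one, Real.one_rpow]
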